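/- Let T, A be bounded linear operators on a complex Hilbert space H with 0 not an approximate eigenvalue of A, and suppose ‖T‖ ≤ ‖T - μA‖ for all μ ∈ ℂ and M_T(A) = ‖T‖ where M_T(A) = sup_{‖f‖=1}(‖Tf‖² - |(Tf,Af)|²/‖Af‖²)^{1/2}. Then ‖T‖² = sup{ g(T*T) - |g(A*T)|²/g(A*A) : g a state on B(H) with g(A*A) ≠ 0 }. -/

import Mathlib

open scoped InnerProductSpace
open ContinuousLinearMap

/-- The translatable radius M_T(A). -/
noncomputable def MTA {H : Type*} [NormedAddCommGroup H] [InnerProductSpace ℂ H]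
    (T A : H →L[ℂ] H) : ℝ :=
  sSup {r : ℝ | ∃ f : H, ‖f‖ = 1 ∧
    r = Real.sqrt (‖T f‖ ^ 2 - ‖⟪A f, T f⟫_ℂ‖ ^ 2 / ‖A f‖ ^ 2)}

/-- Williams-type formula for ‖T‖² via states, assuming M_T(A) = ‖T‖. -/
theorem stmt_14 {H : Type*} [NormedAddCommGroup H] [InnerProductSpace ℂ H] [CompleteSpace H]
    (T A : H →L[ℂ] H)
    (c : ℝ) (hc : 0 < c) (hA : ∀ x : H, c * ‖x‖ ≤ ‖A x‖)
    (hmin : ∀ μ : ℂ, ‖T‖ ≤ ‖T - μ • A‖)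
    (hM : MTA T A = ‖T‖) :
    ‖T‖ ^ 2 = sSup {r : ℝ | ∃ g : (H →L[ℂ] H) →L[ℂ] ℂ,
      (∀ U : H →L[ℂ] H, ∃ s : ℝ, 0 ≤ s ∧ g (adjoint U * U) = (s : ℂ)) ∧
      g 1 = 1 ∧ ‖g‖ = 1 ∧ g (adjoint A * A) ≠ 0 ∧
      r = (g (adjoint T * T)).re
            - ‖g (adjoint A * T)‖ ^ 2 / (g (adjoint A * A)).re} := by
  classical
  set S : Set ℝ := {r : ℝ | ∃ g : (H →L[ℂ] H) →L[ℂ] ℂ,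
      (∀ U : H →L[ℂ] H, ∃ s : ℝ, 0 ≤ s ∧ g (adjoint U * U) = (s : ℂ)) ∧
      g 1 = 1 ∧ ‖g‖ = 1 ∧ g (adjoint A * A) ≠ 0 ∧
      r = (g (adjoint T * T)).re
            - ‖g (adjoint A * T)‖ ^ 2 / (g (adjoint A * A)).re} with hSdef
  by_cases hns : Subsingleton H
  · -- trivial Hilbert space
    have hT0 : T = 0 := by ext x; exact Subsingleton.elim _ _
    have hS : S = (∅ : Set ℝ) := by
      ext r
      simp only [hSdef, Set.mem_setOf_eq, Set.mem_empty_iff_false, iff_false, not_exists]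
      rintro g ⟨-, -, -, hAne, -⟩
      have : adjoint A * A = 0 := by ext x; exact Subsingleton.elim _ _
      exact hAne (by rw [this, map_zero])
    rw [hS, Real.sSup_empty, hT0, norm_zero]
    norm_num
  · have : Nontrivial H := not_subsingleton_iff_nontrivial.mp hns
    obtain ⟨f0, hf0⟩ : ∃ x : H, ‖x‖ = 1 := exists_norm_eq H zero_le_one
    set K : Set ℝ := {r : ℝ | ∃ f : H, ‖f‖ = 1 ∧
      r = ‖T f‖ ^ 2 - ‖⟪A f, T f⟫_ℂ‖ ^ 2 / ‖A f‖ ^ 2} with hKdef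
    -- basic facts about the expression
    have hAf_pos : ∀ f : H, ‖f‖ = 1 → 0 < ‖A f‖ := by
      intro f hf
      have := hA f
      rw [hf, mul_one] at this
      linarith
    have hdiv_le : ∀ f : H, ‖f‖ = 1 →
        ‖⟪A f, T f⟫_ℂ‖ ^ 2 / ‖A f‖ ^ 2 ≤ ‖T f‖ ^ 2 := by
      intro f hf
      have hpos : (0 : ℝ) < ‖A f‖ ^ 2 := pow_pos (hAf_pos f hf) 2
      rw [div_le_iff₀ hpos]
      have h1 : ‖⟪A f, T f⟫_ℂ‖ ≤ ‖A f‖ * ‖T f‖ := by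
        exact norm_inner_le_norm _ _
      calc ‖⟪A f, T f⟫_ℂ‖ ^ 2 ≤ (‖A f‖ * ‖T f‖) ^ 2 := by
            apply pow_le_pow_left₀ (norm_nonneg _) h1
        _ = ‖T f‖ ^ 2 * ‖A f‖ ^ 2 := by ring
    have hK_nonneg : ∀ r ∈ K, 0 ≤ r := by
      rintro r ⟨f, hf, rfl⟩
      have := hdiv_le f hf
      linarith
    have hK_le : ∀ r ∈ K, r ≤ ‖T‖ ^ 2 := by
      rintro r ⟨f, hf, rfl⟩
      have h1 : ‖T f‖ ≤ ‖T‖ := by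
        have := T.le_opNorm f
        rw [hf, mul_one] at this
        exact this
      have h2 : ‖T f‖ ^ 2 ≤ ‖T‖ ^ 2 := by
        apply pow_le_pow_left₀ (norm_nonneg _) h1
      have h3 : 0 ≤ ‖⟪A f, T f⟫_ℂ‖ ^ 2 / ‖A f‖ ^ 2 := by positivity
      linarith
    have hK_ne : K.Nonempty := ⟨_, ⟨f0, hf0, rfl⟩⟩
    have hK_bdd : BddAbove K := ⟨‖T‖ ^ 2, hK_le⟩
    -- vector states: K ⊆ S
    have hKS : K ⊆ S := by
      rintro r ⟨f, hf, rfl⟩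
      set g : (H →L[ℂ] H) →L[ℂ] ℂ :=
        (innerSL ℂ f).comp (ContinuousLinearMap.apply ℂ H f) with hgdef
      have hgapp : ∀ U : H →L[ℂ] H, g U = ⟪f, U f⟫_ℂ := fun U => rfl
      have hsq : ∀ U : H →L[ℂ] H, g (adjoint U * U) = ((‖U f‖ ^ 2 : ℝ) : ℂ) := by
        intro U
        rw [hgapp]
        have h1 : (adjoint U * U) f = adjoint U (U f) := rfl
        rw [h1, ContinuousLinearMap.adjoint_inner_right, inner_self_eq_norm_sq_to_K]
        norm_cast
      have hg1 : g 1 = 1 := by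
        rw [hgapp]
        have : (1 : H →L[ℂ] H) f = f := rfl
        rw [this, inner_self_eq_norm_sq_to_K, hf]
        norm_num
      have hgn : ‖g‖ = 1 := by
        apply le_antisymm
        · apply ContinuousLinearMap.opNorm_le_bound _ zero_le_one
          intro U
          rw [hgapp, one_mul]
          calc ‖⟪f, U f⟫_ℂ‖ ≤ ‖f‖ * ‖U f‖ := norm_inner_le_norm _ _
            _ = ‖U f‖ := by rw [hf, one_mul]
            _ ≤ ‖U‖ * ‖f‖ := U.le_opNorm f
            _ = ‖U‖ := by rw [hf, mul_one]
        · have h1 := g.le_opNorm (1 : H →L[ℂ] H)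
          rw [hg1, norm_one, ContinuousLinearMap.one_def, ContinuousLinearMap.norm_id,
            mul_one] at h1
          exact h1
      have hAT : g (adjoint A * T) = ⟪A f, T f⟫_ℂ := by
        rw [hgapp]
        have h1 : (adjoint A * T) f = adjoint A (T f) := rfl
        rw [h1, ContinuousLinearMap.adjoint_inner_right]
      have hAA : g (adjoint A * A) = ((‖A f‖ ^ 2 : ℝ) : ℂ) := hsq A
      have hAAne : g (adjoint A * A) ≠ 0 := by
        rw [hAA]
        have := hAf_pos f hf
        simp only [ne_eq, Complex.ofReal_eq_zero]
        positivity
      refine ⟨g, ?_, hg1, hgn, hAAne, ?_⟩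
      · intro U
        exact ⟨‖U f‖ ^ 2, by positivity, hsq U⟩
      · rw [hsq T, hAT, hAA, Complex.ofReal_re, Complex.ofReal_re]
    -- sSup K = ‖T‖ ^ 2 from hM
    have hMTA : MTA T A = sSup (Real.sqrt '' K) := by
      unfold MTA
      congr 1
      ext r
      simp only [Set.mem_image, Set.mem_setOf_eq, hKdef]
      constructor
      · rintro ⟨f, hf, rfl⟩
        exact ⟨_, ⟨f, hf, rfl⟩, rfl⟩
      · rintro ⟨x, ⟨f, hf, rfl⟩, rfl⟩
        exact ⟨f, hf, rfl⟩
    have hmap : sSup (Real.sqrt '' K) = Real.sqrt (sSup K) :=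
      (Monotone.map_csSup_of_continuousAt (Real.continuous_sqrt.continuousAt)
        (fun a b h => Real.sqrt_le_sqrt h) hK_ne hK_bdd).symm
    have hsqrt : Real.sqrt (sSup K) = ‖T‖ := by
      rw [← hmap, ← hMTA, hM]
    have hsupK_nonneg : 0 ≤ sSup K := by
      obtain ⟨r, hr⟩ := hK_ne
      exact le_trans (hK_nonneg r hr) (le_csSup hK_bdd hr)
    have hsupK : sSup K = ‖T‖ ^ 2 := by
      have := Real.sq_sqrt hsupK_nonneg
      rw [hsqrt] at this
      exact this.symm
    -- upper bound for S
    have hS_le : ∀ r ∈ S, r ≤ ‖T‖ ^ 2 := by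
      rintro r ⟨g, hpos, hg1, hgn, hAAne, rfl⟩
      obtain ⟨sA, hsA0, hsA⟩ := hpos A
      obtain ⟨sT, hsT0, hsT⟩ := hpos T
      have hsApos : 0 < sA := by
        rcases lt_or_eq_of_le hsA0 with h | h
        · exact h
        · exact absurd (by rw [hsA, ← h]; norm_num) hAAne
      have hre : (g (adjoint A * A)).re = sA := by rw [hsA, Complex.ofReal_re]
      have hTre : (g (adjoint T * T)).re = sT := by rw [hsT, Complex.ofReal_re]
      have hdiv : 0 ≤ ‖g (adjoint A * T)‖ ^ 2 / (g (adjoint A * A)).re := by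
        rw [hre]
        positivity
      have hsT_le : sT ≤ ‖T‖ ^ 2 := by
        have h1 : sT ≤ ‖g (adjoint T * T)‖ := by
          rw [hsT, Complex.norm_real, Real.norm_eq_abs]
          try exact le_abs_self _
        have h2 : ‖g (adjoint T * T)‖ ≤ ‖g‖ * ‖adjoint T * T‖ := g.le_opNorm _
        have h3 : ‖adjoint T * T‖ = ‖T‖ * ‖T‖ := norm_adjoint_comp_self T
        rw [hgn, one_mul, h3] at h2
        calc sT ≤ ‖T‖ * ‖T‖ := le_trans h1 h2
          _ = ‖T‖ ^ 2 := by ring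
      rw [hTre]
      linarith
    have hS_ne : S.Nonempty := hK_ne.mono hKS
    have hS_bdd : BddAbove S := ⟨‖T‖ ^ 2, hS_le⟩
    apply le_antisymm
    · rw [← hsupK]
      exact csSup_le_csSup hS_bdd hK_ne hKS
    · exact csSup_le hS_ne hS_le
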